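/- arXiv:math-ph/0409061 — 2 statements merged into one kernel-verified Lean document; each statement's English description precedes it below -/
import Mathlib

section
/- For β > 1 the equation m = tanh(β m) has exactly three solutions in ℝ: 0, m*(β), and -m*(β), where m*(β) > 0; for 0 < β ≤ 1 the only solution is m = 0. -/
open Real Set

lemma cw_hasDerivAt_tanh (x : ℝ) :
    HasDerivAt Real.tanh ((Real.cosh x ^ 2)⁻¹) x := by
  have h := (Real.hasDerivAt_sinh x).div (Real.hasDerivAt_cosh x) (Real.cosh_pos x).ne'
  have heq : Real.tanh = fun y => Real.sinh y / Real.cosh y :=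
    funext fun y => Real.tanh_eq_sinh_div_cosh y
  rw [heq]
  refine h.congr_deriv ?_
  have h1 := Real.cosh_sq_sub_sinh_sq x
  field_simp
  nlinarith [Real.cosh_pos x]

lemma cw_g_deriv (β m : ℝ) :
    HasDerivAt (fun m => Real.tanh (β * m) - m) (β * (Real.cosh (β * m) ^ 2)⁻¹ - 1) m := by
  have h1 : HasDerivAt (fun m : ℝ => β * m) β m := by
    simpa using (hasDerivAt_id m).const_mul β
  have h2 := (cw_hasDerivAt_tanh (β * m)).comp m h1
  have h3 := h2.sub (hasDerivAt_id m)
  refine h3.congr_deriv ?_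
  ring

lemma cw_g_deriv2 (β m : ℝ) :
    HasDerivAt (fun m => β * (Real.cosh (β * m) ^ 2)⁻¹ - 1)
      (β * (-(2 * Real.cosh (β * m) * (Real.sinh (β * m) * β)) / (Real.cosh (β * m) ^ 2) ^ 2)) m := by
  have h1 : HasDerivAt (fun m : ℝ => β * m) β m := by
    simpa using (hasDerivAt_id m).const_mul β
  have hc : HasDerivAt (fun m => Real.cosh (β * m)) (Real.sinh (β * m) * β) m :=
    (Real.hasDerivAt_cosh (β * m)).comp m h1
  have hc2 : HasDerivAt (fun m => Real.cosh (β * m) ^ 2)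
      (2 * Real.cosh (β * m) * (Real.sinh (β * m) * β)) m := by
    have := hc.fun_pow 2
    simpa [mul_comm, mul_assoc, mul_left_comm] using this
  have hinv := hc2.inv (by positivity)
  exact (hinv.const_mul β).sub_const 1

lemma cw_tanh_lt_self {x : ℝ} (hx : 0 < x) : Real.tanh x < x := by
  rw [Real.tanh_eq_sinh_div_cosh, div_lt_iff₀ (Real.cosh_pos x)]
  have hu : ∀ y : ℝ, HasDerivAt (fun y => y * Real.cosh y - Real.sinh y)
      (1 * Real.cosh y + y * Real.sinh y - Real.cosh y) y := fun y =>
    ((hasDerivAt_id y).mul (Real.hasDerivAt_cosh y)).sub (Real.hasDerivAt_sinh y)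
  have hmono : StrictMonoOn (fun y => y * Real.cosh y - Real.sinh y) (Ici 0) := by
    apply strictMonoOn_of_deriv_pos (convex_Ici 0)
    · exact ((continuous_id.mul Real.continuous_cosh).sub Real.continuous_sinh).continuousOn
    · intro y hy
      rw [interior_Ici] at hy
      rw [(hu y).deriv]
      have hy' : (0:ℝ) < y := hy
      have hs : 0 < Real.sinh y := Real.sinh_pos_iff.mpr hy'
      nlinarith [mul_pos hy' hs]
  have := hmono (self_mem_Ici) (mem_Ici.mpr hx.le) hx
  simp only [Real.cosh_zero, Real.sinh_zero, mul_zero, zero_mul, sub_zero] at this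
  linarith

lemma cw_tanh_lt_one (x : ℝ) : Real.tanh x < 1 := by
  rw [Real.tanh_eq_sinh_div_cosh, div_lt_one (Real.cosh_pos x)]
  exact Real.sinh_lt_cosh x

/-- The Curie–Weiss fixed point equation `m = tanh(β m)`: for `β > 1` there are exactly
three solutions `0, m*(β), -m*(β)` with `m*(β) > 0`; for `0 < β ≤ 1` only `m = 0`. -/
theorem curieWeiss_fixed_points (β : ℝ) (hβ : 0 < β) :
    (1 < β → ∃ ms : ℝ, 0 < ms ∧
      {m : ℝ | m = Real.tanh (β * m)} = {0, ms, -ms}) ∧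
    (β ≤ 1 → {m : ℝ | m = Real.tanh (β * m)} = {0}) := by
  set g : ℝ → ℝ := fun m => Real.tanh (β * m) - m with hg_def
  have hg0 : g 0 = 0 := by simp [hg_def, Real.tanh_zero]
  have hgzero : ∀ m : ℝ, m = Real.tanh (β * m) ↔ g m = 0 := by
    intro m; simp only [hg_def]; constructor <;> intro h <;> linarith
  have hgneg : ∀ m : ℝ, g m = 0 → g (-m) = 0 := by
    intro m h
    simp only [hg_def] at h ⊢
    rw [mul_neg, Real.tanh_neg]
    linarith
  have hgcont : Continuous g :=
    continuous_iff_continuousAt.mpr fun m => (cw_g_deriv β m).differentiableAt.continuousAt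
  constructor
  · -- β > 1
    intro hβ1
    -- strict concavity on Ici 0
    have hconc : StrictConcaveOn ℝ (Ici 0) g := by
      apply strictConcaveOn_of_deriv2_neg (convex_Ici 0) hgcont.continuousOn
      intro x hx
      rw [interior_Ici] at hx
      have hd1 : deriv g = fun m => β * (Real.cosh (β * m) ^ 2)⁻¹ - 1 :=
        funext fun m => (cw_g_deriv β m).deriv
      show deriv (deriv g) x < 0
      rw [hd1, (cw_g_deriv2 β x).deriv]
      have hx' : (0:ℝ) < x := hx
      have hs : 0 < Real.sinh (β * x) := Real.sinh_pos_iff.mpr (by positivity)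
      have hc := Real.cosh_pos (β * x)
      apply mul_neg_of_pos_of_neg hβ
      apply div_neg_of_neg_of_pos
      · nlinarith [mul_pos hc (mul_pos hs hβ)]
      · positivity
    -- at most one positive zero
    have huniq : ∀ a b : ℝ, 0 < a → a < b → g a = 0 → g b = 0 → False := by
      intro a b ha hab hga hgb
      have hb : 0 < b := ha.trans hab
      have ht1 : 0 < a / b := div_pos ha hb
      have ht2 : 0 < 1 - a / b := by
        rw [sub_pos, div_lt_one hb]; exact hab
      have hkey := hconc.2 (self_mem_Ici) (mem_Ici.mpr hb.le) hb.ne ht2 ht1 (by ring)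
      rw [smul_eq_mul, smul_eq_mul, smul_eq_mul, smul_eq_mul, mul_zero, zero_add,
        div_mul_cancel₀ _ hb.ne'] at hkey
      rw [hg0, hga, hgb] at hkey
      simp at hkey
    -- g positive just right of 0
    have hcontd : ContinuousAt (fun m => β * (Real.cosh (β * m) ^ 2)⁻¹ - 1) 0 :=
      (cw_g_deriv2 β 0).differentiableAt.continuousAt
    have hmem : {x : ℝ | 0 < β * (Real.cosh (β * x) ^ 2)⁻¹ - 1} ∈ nhds (0 : ℝ) := by
      have h0 : (0:ℝ) < β * (Real.cosh (β * (0:ℝ)) ^ 2)⁻¹ - 1 := by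
        simp [Real.cosh_zero]; linarith
      have := hcontd (Ioi_mem_nhds h0)
      simpa [Set.preimage, Set.mem_Ioi] using this
    obtain ⟨δ, hδpos, hδ⟩ := Metric.mem_nhds_iff.mp hmem
    set d : ℝ := min (δ / 2) (1 / 2) with hd_def
    have hdpos : 0 < d := lt_min (by linarith) (by norm_num)
    have hd1 : d < 1 := lt_of_le_of_lt (min_le_right _ _) (by norm_num)
    have hmono : StrictMonoOn g (Icc 0 d) := by
      apply strictMonoOn_of_deriv_pos (convex_Icc 0 d) hgcont.continuousOn
      intro x hx
      rw [interior_Icc] at hx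
      rw [(cw_g_deriv β x).deriv]
      have hxball : x ∈ Metric.ball (0:ℝ) δ := by
        rw [Metric.mem_ball, Real.dist_eq, sub_zero, abs_of_pos hx.1]
        calc x < d := hx.2
        _ ≤ δ / 2 := min_le_left _ _
        _ < δ := by linarith
      exact hδ hxball
    have hgd : 0 < g d := by
      have := hmono (left_mem_Icc.mpr hdpos.le) (right_mem_Icc.mpr hdpos.le) hdpos
      rwa [hg0] at this
    have hg1 : g 1 < 0 := by
      simp only [hg_def]
      have := cw_tanh_lt_one (β * 1)
      linarith
    -- IVT
    obtain ⟨ms, hmsIcc, hms⟩ : ∃ ms ∈ Icc d 1, g ms = 0 := by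
      have hsub := intermediate_value_Icc' hd1.le hgcont.continuousOn
      have : (0:ℝ) ∈ Icc (g 1) (g d) := ⟨hg1.le, hgd.le⟩
      obtain ⟨ms, hms1, hms2⟩ := hsub this
      exact ⟨ms, hms1, hms2⟩
    have hmspos : 0 < ms := lt_of_lt_of_le hdpos hmsIcc.1
    -- any positive zero equals ms
    have heqms : ∀ a : ℝ, 0 < a → g a = 0 → a = ms := by
      intro a ha hga
      rcases lt_trichotomy a ms with h | h | h
      · exact absurd (huniq a ms ha h hga hms) (fun h => h)
      · exact h
      · exact absurd (huniq ms a hmspos h hms hga) (fun h => h)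
    refine ⟨ms, hmspos, ?_⟩
    ext m
    simp only [Set.mem_setOf_eq, Set.mem_insert_iff, Set.mem_singleton_iff]
    constructor
    · intro hm
      rw [hgzero] at hm
      rcases lt_trichotomy m 0 with h | h | h
      · right; right
        have : -m = ms := heqms (-m) (by linarith) (hgneg m hm)
        linarith
      · left; exact h
      · right; left; exact heqms m h hm
    · intro hm
      rcases hm with h | h | h
      · rw [h, hgzero]; exact hg0
      · rw [h, hgzero]; exact hms
      · rw [h, hgzero]; exact hgneg ms hms
  · -- β ≤ 1
    intro hβ1
    ext m
    simp only [Set.mem_setOf_eq, Set.mem_singleton_iff]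
    constructor
    · intro hm
      by_contra hne
      rcases lt_trichotomy m 0 with h | h | h
      · have hpos : 0 < -m := by linarith
        have h1 : Real.tanh (β * (-m)) < β * (-m) := cw_tanh_lt_self (by positivity)
        rw [mul_neg, Real.tanh_neg, ← hm] at h1
        nlinarith
      · exact hne h
      · have h1 : Real.tanh (β * m) < β * m := cw_tanh_lt_self (by positivity)
        rw [← hm] at h1
        nlinarith
    · intro h; rw [h, mul_zero, Real.tanh_zero]
end

section
/- Let λ, λ' with 0 ≤ λ' ≤ λ < 1/(2d) and a₀, a₀' > 0 with λ(1+a₀)2d < 1. Then the entrywise product bound holds: Σ_{y ∈ ℤ^d∖V₀} ((I-λ∂)(I-λ(1+a₀)∂)⁻¹(I-λ∂)⁻¹)_{x,y} ≤ C e^{-c·dist(x, ℤ^d∖V₀)} for constants C, c > 0 depending only on d, λ, a₀, uniformly in the finite set V₀ and x ∈ V₀. -/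
/-- The lattice `ℤ^d`. -/
abbrev Zd (d : ℕ) := Fin d → ℤ

/-- Nearest-neighbor adjacency matrix of `ℤ^d`. -/
noncomputable def adj {d : ℕ} (x y : Zd d) : ℝ :=
  if (∑ i, (x i - y i).natAbs) = 1 then 1 else 0

/-- Matrix powers of the adjacency matrix (entrywise, via `tsum`). -/
noncomputable def adjPow (d : ℕ) : ℕ → Zd d → Zd d → ℝ
  | 0 => fun x y => if x = y then 1 else 0
  | n + 1 => fun x y => ∑' z : Zd d, adj x z * adjPow d n z y

/-- The resolvent `(I - λ∂)⁻¹` via its Neumann series, entrywise. -/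
noncomputable def res (d : ℕ) (lam : ℝ) (x y : Zd d) : ℝ :=
  ∑' n : ℕ, lam ^ n * adjPow d n x y

/-- The `ℓ¹` (graph) distance on `ℤ^d`. -/
def dist1 {d : ℕ} (x y : Zd d) : ℕ := ∑ i, (x i - y i).natAbs

/- ----------------- auxiliary lemmas ----------------- -/

lemma dist1_self {d : ℕ} (x : Zd d) : dist1 x x = 0 := by simp [dist1]

lemma dist1_triangle {d : ℕ} (x y z : Zd d) : dist1 x z ≤ dist1 x y + dist1 y z := by
  simp only [dist1, ← Finset.sum_add_distrib]
  refine Finset.sum_le_sum fun i _ => ?_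
  have h : x i - z i = (x i - y i) + (y i - z i) := by ring
  rw [h]; exact Int.natAbs_add_le _ _

lemma adj_eq {d : ℕ} (x y : Zd d) : adj x y = if dist1 x y = 1 then 1 else 0 := rfl

lemma adj_nonneg {d : ℕ} (x y : Zd d) : 0 ≤ adj x y := by
  rw [adj_eq]; split <;> norm_num

lemma adj_le_one {d : ℕ} (x y : Zd d) : adj x y ≤ 1 := by
  rw [adj_eq]; split <;> norm_num

def nbhd {d : ℕ} (x : Zd d) : Finset (Zd d) :=
  Finset.image (fun p : Fin d × Bool => Function.update x p.1 (x p.1 + if p.2 then 1 else -1))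
    Finset.univ

lemma card_nbhd {d : ℕ} (x : Zd d) : (nbhd x).card ≤ 2 * d := by
  refine le_trans Finset.card_image_le ?_
  simp only [Finset.card_univ, Fintype.card_prod, Fintype.card_fin, Fintype.card_bool]
  omega

lemma adj_mem_nbhd {d : ℕ} {x z : Zd d} (h : adj x z ≠ 0) : z ∈ nbhd x := by
  rw [adj_eq] at h
  have h1 : dist1 x z = 1 := by
    by_cases hc : dist1 x z = 1
    · exact hc
    · simp [hc] at h
  simp only [dist1] at h1
  obtain ⟨i, -, hi⟩ := Finset.exists_ne_zero_of_sum_ne_zero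
    (by rw [h1]; exact one_ne_zero : (∑ i, (x i - z i).natAbs) ≠ 0)
  have hsplit := Finset.add_sum_erase Finset.univ (fun j => (x j - z j).natAbs) (Finset.mem_univ i)
  rw [h1] at hsplit
  have ha : (x i - z i).natAbs = 1 := by omega
  have hz0 : ∀ j ∈ Finset.univ.erase i, (x j - z j).natAbs = 0 := by
    rw [← Finset.sum_eq_zero_iff]; omega
  have hother : ∀ j, j ≠ i → z j = x j := by
    intro j hj
    have := hz0 j (Finset.mem_erase.mpr ⟨hj, Finset.mem_univ j⟩)
    omega
  rcases Int.natAbs_eq_iff.mp ha with hc | hc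
  · refine Finset.mem_image.mpr ⟨(i, false), Finset.mem_univ _, ?_⟩
    funext j
    rcases eq_or_ne j i with rfl | hji
    · simp only [Function.update_self]; norm_num; omega
    · rw [Function.update_of_ne hji]; exact (hother j hji).symm
  · refine Finset.mem_image.mpr ⟨(i, true), Finset.mem_univ _, ?_⟩
    funext j
    rcases eq_or_ne j i with rfl | hji
    · simp only [Function.update_self]; norm_num; omega
    · rw [Function.update_of_ne hji]; exact (hother j hji).symm

lemma adj_eq_zero_of_not_mem {d : ℕ} {x z : Zd d} (h : z ∉ nbhd x) : adj x z = 0 := by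
  by_contra hc; exact h (adj_mem_nbhd hc)

lemma dist1_of_mem_nbhd {d : ℕ} {x z : Zd d} (h : z ∈ nbhd x) : dist1 x z ≤ 1 := by
  obtain ⟨⟨i, b⟩, -, rfl⟩ := Finset.mem_image.mp h
  simp only [dist1]
  have hterm : ∀ j, (x j - Function.update x i (x i + if b then 1 else -1) j).natAbs
      = if j = i then 1 else 0 := by
    intro j
    rcases eq_or_ne j i with rfl | hji
    · simp only [Function.update_self, if_pos rfl]
      cases b <;> simp <;> omega
    · rw [Function.update_of_ne hji, if_neg hji]; omega
  rw [Finset.sum_congr rfl fun j _ => hterm j]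
  simp

lemma adjPow_succ (d n : ℕ) (x y : Zd d) :
    adjPow d (n + 1) x y = ∑' z : Zd d, adj x z * adjPow d n z y := rfl

lemma adjPow_succ_sum (d n : ℕ) (x y : Zd d) :
    adjPow d (n + 1) x y = ∑ z ∈ nbhd x, adj x z * adjPow d n z y := by
  rw [adjPow_succ]
  exact tsum_eq_sum fun z hz => by rw [adj_eq_zero_of_not_mem hz, zero_mul]

lemma adjPow_nonneg (d : ℕ) : ∀ (n : ℕ) (x y : Zd d), 0 ≤ adjPow d n x y := by
  intro n
  induction n with
  | zero => intro x y; simp only [adjPow]; split <;> norm_num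
  | succ n ih =>
    intro x y
    rw [adjPow_succ_sum]
    exact Finset.sum_nonneg fun z _ => mul_nonneg (adj_nonneg x z) (ih z y)

lemma adjPow_le (d : ℕ) : ∀ (n : ℕ) (x y : Zd d), adjPow d n x y ≤ (2 * (d : ℝ)) ^ n := by
  intro n
  induction n with
  | zero => intro x y; simp only [adjPow, pow_zero]; split <;> norm_num
  | succ n ih =>
    intro x y
    rw [adjPow_succ_sum]
    calc ∑ z ∈ nbhd x, adj x z * adjPow d n z y
        ≤ ∑ z ∈ nbhd x, 1 * (2 * (d : ℝ)) ^ n := by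
          refine Finset.sum_le_sum fun z _ => ?_
          exact mul_le_mul (adj_le_one x z) (ih z y) (adjPow_nonneg d n z y) zero_le_one
      _ = (nbhd x).card * (2 * (d : ℝ)) ^ n := by
          rw [Finset.sum_const, nsmul_eq_mul, one_mul]
      _ ≤ (2 * (d : ℝ)) * (2 * (d : ℝ)) ^ n := by
          refine mul_le_mul_of_nonneg_right ?_ (by positivity)
          have := card_nbhd x
          calc ((nbhd x).card : ℝ) ≤ ((2 * d : ℕ) : ℝ) := by exact_mod_cast this
            _ = 2 * (d : ℝ) := by push_cast; ring
      _ = (2 * (d : ℝ)) ^ (n + 1) := by rw [pow_succ]; ring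

lemma adjPow_eq_zero (d : ℕ) : ∀ (n : ℕ) {x y : Zd d}, n < dist1 x y → adjPow d n x y = 0 := by
  intro n
  induction n with
  | zero =>
    intro x y h
    simp only [adjPow]
    rw [if_neg]
    rintro rfl
    rw [dist1_self] at h; omega
  | succ n ih =>
    intro x y h
    rw [adjPow_succ_sum]
    refine Finset.sum_eq_zero fun z hz => ?_
    by_cases hA : adj x z = 0
    · rw [hA, zero_mul]
    · have h1 : dist1 x z ≤ 1 := dist1_of_mem_nbhd (adj_mem_nbhd hA)
      have h2 : n < dist1 z y := by
        have := dist1_triangle x z y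
        omega
      rw [ih h2, mul_zero]

lemma res_nonneg (d : ℕ) {l : ℝ} (hl : 0 ≤ l) (x y : Zd d) : 0 ≤ res d l x y :=
  tsum_nonneg fun n => mul_nonneg (pow_nonneg hl n) (adjPow_nonneg d n x y)

lemma res_term_le (d : ℕ) {l r : ℝ} (hl : 0 ≤ l) (hr : 2 * (d : ℝ) * l ≤ r) (n : ℕ)
    (x y : Zd d) : l ^ n * adjPow d n x y ≤ r ^ n := by
  have hr0 : 0 ≤ r := le_trans (by positivity) hr
  calc l ^ n * adjPow d n x y ≤ l ^ n * (2 * (d : ℝ)) ^ n :=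
        mul_le_mul_of_nonneg_left (adjPow_le d n x y) (pow_nonneg hl n)
    _ = (2 * (d : ℝ) * l) ^ n := by rw [mul_pow]; ring
    _ ≤ r ^ n := pow_le_pow_left₀ (by positivity) hr n

lemma summable_res_terms (d : ℕ) {l r : ℝ} (hl : 0 ≤ l) (hr : 2 * (d : ℝ) * l ≤ r)
    (hr1 : r < 1) (x y : Zd d) : Summable fun n => l ^ n * adjPow d n x y := by
  have hr0 : 0 ≤ r := le_trans (by positivity) hr
  exact Summable.of_nonneg_of_le
    (fun n => mul_nonneg (pow_nonneg hl n) (adjPow_nonneg d n x y))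
    (fun n => res_term_le d hl hr n x y) (summable_geometric_of_lt_one hr0 hr1)

lemma res_le (d : ℕ) {l r : ℝ} (hl : 0 ≤ l) (hr : 2 * (d : ℝ) * l ≤ r) (hr1 : r < 1)
    (x y : Zd d) : res d l x y ≤ (1 - r)⁻¹ * r ^ dist1 x y := by
  have hr0 : 0 ≤ r := le_trans (by positivity) hr
  have hsum := summable_res_terms d hl hr hr1 x y
  set D := dist1 x y with hD
  have h0 : ∀ i ∈ Finset.range D, l ^ i * adjPow d i x y = 0 := fun i hi => by
    rw [adjPow_eq_zero d i (Finset.mem_range.mp hi), mul_zero]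
  have hsh : Summable fun i => l ^ (i + D) * adjPow d (i + D) x y :=
    (summable_nat_add_iff (f := fun n => l ^ n * adjPow d n x y) D).mpr hsum
  calc res d l x y = ∑' n : ℕ, l ^ n * adjPow d n x y := rfl
    _ = (∑ i ∈ Finset.range D, l ^ i * adjPow d i x y)
        + ∑' i : ℕ, l ^ (i + D) * adjPow d (i + D) x y := (Summable.sum_add_tsum_nat_add (f := fun n => l ^ n * adjPow d n x y) D hsum).symm
    _ = ∑' i : ℕ, l ^ (i + D) * adjPow d (i + D) x y := by
        rw [Finset.sum_eq_zero h0, zero_add]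
    _ ≤ ∑' i : ℕ, r ^ D * r ^ i := by
        refine Summable.tsum_le_tsum (fun i => ?_) hsh
          ((summable_geometric_of_lt_one hr0 hr1).mul_left _)
        rw [← pow_add, Nat.add_comm D i]
        exact res_term_le d hl hr (i + D) x y
    _ = r ^ D * (1 - r)⁻¹ := by rw [tsum_mul_left, tsum_geometric_of_lt_one hr0 hr1]
    _ = (1 - r)⁻¹ * r ^ D := mul_comm _ _

def norm1 {d : ℕ} (z : Zd d) : ℕ := ∑ i, (z i).natAbs

lemma dist1_eq_norm1 {d : ℕ} (x y : Zd d) : dist1 x y = norm1 (x - y) := by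
  simp [dist1, norm1]

lemma summable_int_geo {t : ℝ} (h0 : 0 ≤ t) (h1 : t < 1) :
    Summable fun a : ℤ => t ^ a.natAbs := by
  apply Summable.of_nat_of_neg
  · simpa using summable_geometric_of_lt_one h0 h1
  · simpa using summable_geometric_of_lt_one h0 h1

lemma summable_norm1 : ∀ (d : ℕ) {t : ℝ}, 0 ≤ t → t < 1 →
    Summable fun z : Zd d => t ^ norm1 z := by
  intro d
  induction d with
  | zero =>
    intro t h0 h1
    haveI : Unique (Zd 0) := ⟨⟨fun i => 0⟩, fun f => funext fun i => absurd i.2 (by omega)⟩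
    exact .of_finite
  | succ n ih =>
    intro t h0 h1
    rw [← (Fin.consEquiv (fun _ : Fin (n + 1) => ℤ)).summable_iff]
    refine Summable.congr (Summable.mul_of_nonneg (summable_int_geo h0 h1) (ih h0 h1)
      (fun a => by positivity) (fun z => by positivity)) ?_
    intro p
    show t ^ p.1.natAbs * t ^ norm1 p.2 = t ^ norm1 (Fin.cons p.1 p.2)
    rw [← pow_add]
    congr 1
    simp [norm1, Fin.sum_univ_succ]

lemma summable_dist1 {d : ℕ} {t : ℝ} (h0 : 0 ≤ t) (h1 : t < 1) (x : Zd d) :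
    Summable fun y : Zd d => t ^ dist1 x y := by
  have h := ((Equiv.subLeft x).summable_iff (f := fun z : Zd d => t ^ norm1 z)).mpr
    (summable_norm1 d h0 h1)
  refine h.congr fun y => ?_
  show t ^ norm1 (x - y) = t ^ dist1 x y
  rw [← dist1_eq_norm1]

lemma tsum_dist1_eq {d : ℕ} (t : ℝ) (x : Zd d) :
    ∑' y : Zd d, t ^ dist1 x y = ∑' z : Zd d, t ^ norm1 z := by
  rw [← (Equiv.subLeft x).tsum_eq (fun z : Zd d => t ^ norm1 z)]
  refine tsum_congr fun y => ?_
  show t ^ dist1 x y = t ^ norm1 (x - y)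
  rw [← dist1_eq_norm1]

/-- Exponential locality: the row sums over `y ∉ V₀` of the matrix
`(I-λ∂)(I-λ(1+a₀)∂)⁻¹(I-λ∂)⁻¹` are bounded by `C e^{-c·dist(x, ℤ^d∖V₀)}`,
uniformly in the finite set `V₀` and `x ∈ V₀`. -/
theorem exponential_locality (d : ℕ) (hd : 0 < d) (lam a0 : ℝ)
    (h1 : 0 ≤ lam) (h2 : lam < 1 / (2 * d)) (h3 : 0 < a0)
    (h4 : lam * (1 + a0) * (2 * d) < 1) :
    ∃ C : ℝ, 0 < C ∧ ∃ c : ℝ, 0 < c ∧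
      ∀ V0 : Finset (Zd d), ∀ x ∈ V0,
        (∑' y : Zd d, if y ∈ V0 then 0 else
            ∑' z : Zd d, ∑' w : Zd d,
              ((if x = z then 1 else 0) - lam * adj x z) *
                res d (lam * (1 + a0)) z w * res d lam w y) ≤
          C * Real.exp (-c * (⨅ y : {y : Zd d // y ∉ V0}, (dist1 x y.1 : ℝ))) := by
  classical
  have hd1 : (1:ℝ) ≤ (d:ℝ) := by exact_mod_cast hd
  set μ : ℝ := lam * (1 + a0) with hμdef
  have hμ0 : 0 ≤ μ := mul_nonneg h1 (by linarith)
  set r : ℝ := μ * (2 * d) with hrdef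
  have hr1 : r < 1 := h4
  have hr0 : 0 ≤ r := mul_nonneg hμ0 (by positivity)
  have hK0 : 0 < (1 - r)⁻¹ := inv_pos.mpr (by linarith)
  set K : ℝ := (1 - r)⁻¹ with hKdef
  set t : ℝ := max (Real.sqrt r) 2⁻¹ with htdef
  have ht05 : (2⁻¹ : ℝ) ≤ t := le_max_right _ _
  have ht0 : (0:ℝ) < t := lt_of_lt_of_le (by norm_num) ht05
  have ht1 : t < 1 := by
    refine max_lt ?_ (by norm_num)
    rw [show (1:ℝ) = Real.sqrt 1 from (Real.sqrt_one).symm]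
    exact Real.sqrt_lt_sqrt hr0 hr1
  have hrt2 : r ≤ t ^ 2 := by
    calc r = Real.sqrt r ^ 2 := (Real.sq_sqrt hr0).symm
      _ ≤ t ^ 2 := by
          have := le_max_left (Real.sqrt r) (2⁻¹ : ℝ)
          nlinarith [Real.sqrt_nonneg r]
  set u : ℝ := Real.sqrt t with hudef
  have hu0 : 0 < u := Real.sqrt_pos.mpr ht0
  have hu1 : u < 1 := by
    rw [hudef, show (1:ℝ) = Real.sqrt 1 from (Real.sqrt_one).symm]
    exact Real.sqrt_lt_sqrt ht0.le ht1
  have htu : t = u ^ 2 := (Real.sq_sqrt ht0.le).symm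
  have hlμ : lam ≤ μ := by nlinarith
  have hlam2d : 2 * (d:ℝ) * lam ≤ r := by nlinarith
  have hμ2d : 2 * (d:ℝ) * μ ≤ r := le_of_eq (by rw [hrdef]; ring)
  have hres1 : ∀ z w : Zd d, res d μ z w ≤ K * r ^ dist1 z w :=
    fun z w => res_le d hμ0 hμ2d hr1 z w
  have hres2 : ∀ w y : Zd d, res d lam w y ≤ K * r ^ dist1 w y :=
    fun w y => res_le d h1 hlam2d hr1 w y
  have hsum_t : ∀ z : Zd d, Summable fun w : Zd d => t ^ dist1 z w :=
    fun z => summable_dist1 ht0.le ht1 z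
  set S : ℝ := ∑' z : Zd d, t ^ norm1 z with hSdef
  have hS1 : (1:ℝ) ≤ S := by
    have hs := summable_norm1 d ht0.le ht1
    have h0' : t ^ norm1 (0 : Zd d) = 1 := by simp [norm1]
    calc (1:ℝ) = t ^ norm1 (0 : Zd d) := h0'.symm
      _ ≤ S := Summable.le_tsum hs 0 fun z _ => by positivity
  set Su : ℝ := ∑' z : Zd d, u ^ norm1 z with hSudef
  have hSu1 : (1:ℝ) ≤ Su := by
    have hs := summable_norm1 d hu0.le hu1
    have h0' : u ^ norm1 (0 : Zd d) = 1 := by simp [norm1]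
    calc (1:ℝ) = u ^ norm1 (0 : Zd d) := h0'.symm
      _ ≤ Su := Summable.le_tsum hs 0 fun z _ => by positivity
  set C2 : ℝ := 4 * (2 * (d:ℝ) + 1) * K ^ 2 * S with hC2def
  have hC2 : 0 < C2 := by positivity
  refine ⟨C2 * Su, by positivity, -Real.log u, ?_, ?_⟩
  · have : Real.log u < 0 := Real.log_neg hu0 hu1
    linarith
  intro V0 x hx
  -- pointwise bound on the product of resolvents
  have hpt : ∀ z y w : Zd d, res d μ z w * res d lam w y
      ≤ (K ^ 2 * t ^ dist1 z y) * t ^ dist1 z w := by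
    intro z y w
    have hmul : res d μ z w * res d lam w y ≤ (K * r ^ dist1 z w) * (K * r ^ dist1 w y) :=
      mul_le_mul (hres1 z w) (hres2 w y) (res_nonneg d h1 w y) (by positivity)
    refine hmul.trans ?_
    have hr' : r ^ (dist1 z w + dist1 w y) ≤ t ^ dist1 z y * t ^ dist1 z w := by
      calc r ^ (dist1 z w + dist1 w y) ≤ (t ^ 2) ^ (dist1 z w + dist1 w y) :=
            pow_le_pow_left₀ hr0 hrt2 _
        _ = t ^ (dist1 z w + dist1 w y) * t ^ (dist1 z w + dist1 w y) := by
            rw [← pow_add, ← pow_mul]; ring_nf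
        _ ≤ t ^ dist1 z y * t ^ dist1 z w := by
            refine mul_le_mul ?_ ?_ (by positivity) (by positivity)
            · exact pow_le_pow_of_le_one ht0.le ht1.le (dist1_triangle z w y)
            · exact pow_le_pow_of_le_one ht0.le ht1.le (Nat.le_add_right _ _)
    calc (K * r ^ dist1 z w) * (K * r ^ dist1 w y)
        = K ^ 2 * r ^ (dist1 z w + dist1 w y) := by rw [pow_add]; ring
      _ ≤ K ^ 2 * (t ^ dist1 z y * t ^ dist1 z w) :=
          mul_le_mul_of_nonneg_left hr' (by positivity)
      _ = (K ^ 2 * t ^ dist1 z y) * t ^ dist1 z w := by ring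
  have hPsum : ∀ z y : Zd d, Summable fun w => res d μ z w * res d lam w y := by
    intro z y
    exact Summable.of_nonneg_of_le
      (fun w => mul_nonneg (res_nonneg d hμ0 z w) (res_nonneg d h1 w y))
      (hpt z y) ((hsum_t z).mul_left _)
  have hP0 : ∀ z y : Zd d, 0 ≤ ∑' w, res d μ z w * res d lam w y :=
    fun z y => tsum_nonneg fun w => mul_nonneg (res_nonneg d hμ0 z w) (res_nonneg d h1 w y)
  have hPb : ∀ z y : Zd d, (∑' w, res d μ z w * res d lam w y) ≤ K ^ 2 * S * t ^ dist1 z y := by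
    intro z y
    calc (∑' w, res d μ z w * res d lam w y)
        ≤ ∑' w, (K ^ 2 * t ^ dist1 z y) * t ^ dist1 z w :=
          Summable.tsum_le_tsum (hpt z y) (hPsum z y) ((hsum_t z).mul_left _)
      _ = (K ^ 2 * t ^ dist1 z y) * ∑' w, t ^ dist1 z w := tsum_mul_left
      _ = (K ^ 2 * t ^ dist1 z y) * S := by rw [tsum_dist1_eq t z]
      _ = K ^ 2 * S * t ^ dist1 z y := by ring
  set B : Finset (Zd d) := insert x (nbhd x) with hB
  have hEeq : ∀ y : Zd d,
      (∑' z : Zd d, ∑' w : Zd d, ((if x = z then 1 else 0) - lam * adj x z) *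
          res d μ z w * res d lam w y)
      = ∑ z ∈ B, ((if x = z then 1 else 0) - lam * adj x z) *
          (∑' w, res d μ z w * res d lam w y) := by
    intro y
    have hinner : ∀ z : Zd d,
        (∑' w : Zd d, ((if x = z then 1 else 0) - lam * adj x z) * res d μ z w * res d lam w y)
        = ((if x = z then 1 else 0) - lam * adj x z) * ∑' w, res d μ z w * res d lam w y := by
      intro z
      rw [← tsum_mul_left]
      exact tsum_congr fun w => by ring
    rw [tsum_congr hinner]
    refine tsum_eq_sum fun z hz => ?_
    have hxz : x ≠ z := fun h => hz (h ▸ Finset.mem_insert_self x (nbhd x))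
    have hadj : adj x z = 0 :=
      adj_eq_zero_of_not_mem fun h => hz (Finset.mem_insert_of_mem h)
    rw [if_neg hxz, hadj]; ring
  have hlam1 : lam ≤ 1 := by
    have : (0:ℝ) < 2 * d := by positivity
    rw [lt_div_iff₀ this] at h2
    nlinarith
  have hEb : ∀ y : Zd d,
      |∑' z : Zd d, ∑' w : Zd d, ((if x = z then 1 else 0) - lam * adj x z) *
          res d μ z w * res d lam w y| ≤ C2 * t ^ dist1 x y := by
    intro y
    rw [hEeq y]
    refine (Finset.abs_sum_le_sum_abs _ _).trans ?_
    have hterm : ∀ z ∈ B, |((if x = z then 1 else 0) - lam * adj x z) *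
        (∑' w, res d μ z w * res d lam w y)| ≤ 2 * (K ^ 2 * S * (2 * t ^ dist1 x y)) := by
      intro z hz
      rw [abs_mul, abs_of_nonneg (hP0 z y)]
      have hc2 : |(if x = z then (1:ℝ) else 0) - lam * adj x z| ≤ 2 := by
        have ha1 : |if x = z then (1:ℝ) else 0| ≤ 1 := by split <;> norm_num
        have ha2 : |lam * adj x z| ≤ 1 := by
          rw [abs_of_nonneg (mul_nonneg h1 (adj_nonneg x z))]
          exact mul_le_one₀ hlam1 (adj_nonneg x z) (adj_le_one x z)
        calc |(if x = z then (1:ℝ) else 0) - lam * adj x z|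
            ≤ |if x = z then (1:ℝ) else 0| + |lam * adj x z| := abs_sub _ _
          _ ≤ 2 := by linarith
      have hPz : (∑' w, res d μ z w * res d lam w y) ≤ K ^ 2 * S * (2 * t ^ dist1 x y) := by
        refine (hPb z y).trans ?_
        have hxz : dist1 x z ≤ 1 := by
          rcases Finset.mem_insert.mp hz with rfl | hzz
          · rw [dist1_self]; omega
          · exact dist1_of_mem_nbhd hzz
        have hdle : dist1 x y ≤ dist1 z y + 1 := by
          have := dist1_triangle x z y
          omega
        have hpow : t ^ dist1 z y ≤ 2 * t ^ dist1 x y := by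
          have h5 : t ^ (dist1 z y + 1) ≤ t ^ dist1 x y :=
            pow_le_pow_of_le_one ht0.le ht1.le hdle
          rw [pow_succ] at h5
          have h6 : (2:ℝ)⁻¹ * t ^ dist1 z y ≤ t * t ^ dist1 z y :=
            mul_le_mul_of_nonneg_right ht05 (pow_nonneg ht0.le _)
          have h7 : t * t ^ dist1 z y = t ^ dist1 z y * t := mul_comm _ _
          linarith only [h5, h6, h7]
        have hKS : 0 ≤ K ^ 2 * S := by positivity
        calc K ^ 2 * S * t ^ dist1 z y ≤ K ^ 2 * S * (2 * t ^ dist1 x y) :=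
              mul_le_mul_of_nonneg_left hpow hKS
          _ = K ^ 2 * S * (2 * t ^ dist1 x y) := rfl
      calc |(if x = z then (1:ℝ) else 0) - lam * adj x z| * (∑' w, res d μ z w * res d lam w y)
          ≤ 2 * (∑' w, res d μ z w * res d lam w y) :=
            mul_le_mul_of_nonneg_right hc2 (hP0 z y)
        _ ≤ 2 * (K ^ 2 * S * (2 * t ^ dist1 x y)) := by
            refine mul_le_mul_of_nonneg_left hPz (by norm_num)
    calc ∑ z ∈ B, |((if x = z then 1 else 0) - lam * adj x z) *
          (∑' w, res d μ z w * res d lam w y)|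
        ≤ ∑ _z ∈ B, 2 * (K ^ 2 * S * (2 * t ^ dist1 x y)) := Finset.sum_le_sum hterm
      _ = B.card * (2 * (K ^ 2 * S * (2 * t ^ dist1 x y))) := by
          rw [Finset.sum_const, nsmul_eq_mul]
      _ ≤ (2 * (d:ℝ) + 1) * (2 * (K ^ 2 * S * (2 * t ^ dist1 x y))) := by
          have hcardn : B.card ≤ 2 * d + 1 := by
            rw [hB]
            have := Finset.card_insert_le x (nbhd x)
            have := card_nbhd x
            omega
          have hcard : (B.card : ℝ) ≤ 2 * (d:ℝ) + 1 := by exact_mod_cast hcardn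
          refine mul_le_mul_of_nonneg_right hcard (by positivity)
      _ = C2 * t ^ dist1 x y := by rw [hC2def]; ring
  -- distance to the complement
  have hex : ∃ y : Zd d, y ∉ V0 := by
    haveI : Infinite (Zd d) := Infinite.of_injective (fun n : ℤ => (fun _ => n : Zd d))
      (fun a b h => congrFun h ⟨0, hd⟩)
    exact V0.exists_notMem
  obtain ⟨ye, hye⟩ := hex
  set SD : Set ℕ := {n | ∃ y : Zd d, y ∉ V0 ∧ dist1 x y = n} with hSDdef
  have hSDne : SD.Nonempty := ⟨dist1 x ye, ye, hye, rfl⟩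
  set Dn : ℕ := sInf SD with hDndef
  obtain ⟨y0, hy0, hdy0⟩ : ∃ y : Zd d, y ∉ V0 ∧ dist1 x y = Dn := Nat.sInf_mem hSDne
  have hDle : ∀ y : Zd d, y ∉ V0 → Dn ≤ dist1 x y := fun y hy => Nat.sInf_le ⟨y, hy, rfl⟩
  have hInfLe : (⨅ y : {y : Zd d // y ∉ V0}, (dist1 x y.1 : ℝ)) ≤ (Dn : ℝ) := by
    haveI : Nonempty {y : Zd d // y ∉ V0} := ⟨⟨y0, hy0⟩⟩
    have hbdd : BddBelow (Set.range fun y : {y : Zd d // y ∉ V0} => (dist1 x y.1 : ℝ)) := by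
      refine ⟨0, ?_⟩
      rintro a ⟨y, rfl⟩
      positivity
    have := ciInf_le hbdd (⟨y0, hy0⟩ : {y : Zd d // y ∉ V0})
    rw [hdy0] at this
    exact this
  -- majorant
  have hmaj : ∀ y : Zd d, |if y ∈ V0 then 0 else
      ∑' z : Zd d, ∑' w : Zd d, ((if x = z then 1 else 0) - lam * adj x z) *
        res d μ z w * res d lam w y| ≤ (C2 * u ^ Dn) * u ^ dist1 x y := by
    intro y
    by_cases hy : y ∈ V0
    · rw [if_pos hy, abs_zero]
      positivity
    · rw [if_neg hy]
      refine (hEb y).trans ?_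
      have hth : t ^ dist1 x y ≤ u ^ Dn * u ^ dist1 x y := by
        calc t ^ dist1 x y = u ^ dist1 x y * u ^ dist1 x y := by
              rw [htu, ← pow_add, ← pow_mul]; ring_nf
          _ ≤ u ^ Dn * u ^ dist1 x y := by
              refine mul_le_mul_of_nonneg_right ?_ (by positivity)
              exact pow_le_pow_of_le_one hu0.le hu1.le (hDle y hy)
      calc C2 * t ^ dist1 x y ≤ C2 * (u ^ Dn * u ^ dist1 x y) :=
            mul_le_mul_of_nonneg_left hth hC2.le
        _ = (C2 * u ^ Dn) * u ^ dist1 x y := by ring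
  have hgsum : Summable fun y : Zd d => (C2 * u ^ Dn) * u ^ dist1 x y :=
    (summable_dist1 hu0.le hu1 x).mul_left _
  have hfsum : Summable fun y : Zd d => if y ∈ V0 then 0 else
      ∑' z : Zd d, ∑' w : Zd d, ((if x = z then 1 else 0) - lam * adj x z) *
        res d μ z w * res d lam w y := by
    refine Summable.of_norm_bounded hgsum fun y => ?_
    rw [Real.norm_eq_abs]
    exact hmaj y
  have hfinal : (∑' y : Zd d, if y ∈ V0 then 0 else
      ∑' z : Zd d, ∑' w : Zd d, ((if x = z then 1 else 0) - lam * adj x z) *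
        res d μ z w * res d lam w y) ≤ (C2 * Su) * u ^ Dn := by
    calc (∑' y : Zd d, if y ∈ V0 then 0 else
        ∑' z : Zd d, ∑' w : Zd d, ((if x = z then 1 else 0) - lam * adj x z) *
          res d μ z w * res d lam w y)
        ≤ ∑' y : Zd d, (C2 * u ^ Dn) * u ^ dist1 x y :=
          Summable.tsum_le_tsum (fun y => (le_abs_self _).trans (hmaj y)) hfsum hgsum
      _ = (C2 * u ^ Dn) * ∑' y : Zd d, u ^ dist1 x y := tsum_mul_left
      _ = (C2 * u ^ Dn) * Su := by rw [tsum_dist1_eq u x]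
      _ = (C2 * Su) * u ^ Dn := by ring
  refine hfinal.trans ?_
  have hupow : u ^ Dn = Real.exp ((Dn : ℝ) * Real.log u) := by
    rw [Real.exp_nat_mul, Real.exp_log hu0]
  have hlog : Real.log u < 0 := Real.log_neg hu0 hu1
  have hmono : Real.exp ((Dn : ℝ) * Real.log u)
      ≤ Real.exp (-(-Real.log u) * (⨅ y : {y : Zd d // y ∉ V0}, (dist1 x y.1 : ℝ))) := by
    rw [neg_neg]
    refine Real.exp_le_exp.mpr ?_
    have h := mul_le_mul_of_nonpos_right hInfLe hlog.le
    calc (Dn : ℝ) * Real.log u ≤ (⨅ y : {y : Zd d // y ∉ V0}, (dist1 x y.1 : ℝ)) * Real.log u := h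
      _ = Real.log u * (⨅ y : {y : Zd d // y ∉ V0}, (dist1 x y.1 : ℝ)) := mul_comm _ _
  calc (C2 * Su) * u ^ Dn
      = (C2 * Su) * Real.exp ((Dn : ℝ) * Real.log u) := by rw [hupow]
    _ ≤ (C2 * Su) * Real.exp (-(-Real.log u) * (⨅ y : {y : Zd d // y ∉ V0}, (dist1 x y.1 : ℝ))) :=
        mul_le_mul_of_nonneg_left hmono (mul_pos hC2 (lt_of_lt_of_le one_pos hSu1)).le
end
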